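/- Suppose f_i = (1/m) Σ_{j=1}^m f_{i,j} where each f_{i,j} is convex and L-smooth, and g is obtained by sampling j uniformly at random and setting g = ∇f_{i,j}(x). Then for any fixed point x⋆, E[‖g - ∇f_i(x⋆)‖²] ≤ 4L·D_{f_i}(x, x⋆) + C, where C = (2/m) Σ_j ‖∇f_{i,j}(x⋆)‖² - 2‖∇f_i(x⋆)‖². -/

import Mathlib

open RealInnerProductSpace Finset

section aux
variable {E : Type*} [NormedAddCommGroup E] [InnerProductSpace ℝ E] [CompleteSpace E]

lemma line_hasDerivAt {f : E → ℝ} (hf : Differentiable ℝ f) (a v : E) (t : ℝ) :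
    HasDerivAt (fun s : ℝ => f (a + s • v)) ⟪gradient f (a + t • v), v⟫ t := by
  have h1 : HasDerivAt (fun s : ℝ => a + s • v) v t := by
    simpa using ((hasDerivAt_id t).smul_const v).const_add a
  have h2 := ((hf (a + t • v)).hasGradientAt).hasFDerivAt
  have h3 := h2.comp_hasDerivAt t h1
  simpa [InnerProductSpace.toDual_apply_apply, Function.comp_def] using h3

lemma subgrad {f : E → ℝ} (hf : Differentiable ℝ f) (hc : ConvexOn ℝ Set.univ f)
    (x y : E) : f y + ⟪gradient f y, x - y⟫ ≤ f x := by
  set v := x - y with hv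
  have hline := line_hasDerivAt hf y v
  set g : ℝ → ℝ := fun s => f (y + s • v) with hg
  have hgc : ConvexOn ℝ Set.univ g := by
    have := hc.comp_affineMap (AffineMap.lineMap y x : ℝ →ᵃ[ℝ] E)
    have he : g = f ∘ (AffineMap.lineMap y x : ℝ →ᵃ[ℝ] E) := by
      funext s
      simp only [hg, Function.comp_apply, AffineMap.lineMap_apply_module, hv]
      congr 1
      module
    rw [he]
    simpa using this
  have hd0 : HasDerivAt g ⟪gradient f y, v⟫ 0 := by simpa using hline 0
  have hslope := hgc.deriv_le_slope (Set.mem_univ (0:ℝ)) (Set.mem_univ (1:ℝ)) one_pos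
    (hd0.differentiableAt)
  rw [hd0.deriv] at hslope
  have : slope g 0 1 = g 1 - g 0 := by simp [slope_def_field]
  rw [this] at hslope
  have h1 : g 1 = f x := by simp [hg, hv]
  have h0 : g 0 = f y := by simp [hg]
  rw [h1, h0] at hslope
  linarith

lemma descent {f : E → ℝ} {L : ℝ} (hf : Differentiable ℝ f) (hL0 : 0 ≤ L)
    (hL : ∀ p q, ‖gradient f p - gradient f q‖ ≤ L * ‖p - q‖) (a b : E) :
    f b ≤ f a + ⟪gradient f a, b - a⟫ + L / 2 * ‖b - a‖ ^ 2 := by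
  set v := b - a with hv
  set ψ : ℝ → ℝ := fun t =>
    f (a + t • v) - t * ⟪gradient f a, v⟫ - t ^ 2 * (L / 2 * ‖v‖ ^ 2) with hψ
  have hψd : ∀ t : ℝ, HasDerivAt ψ
      (⟪gradient f (a + t • v), v⟫ - ⟪gradient f a, v⟫ - 2 * t * (L / 2 * ‖v‖ ^ 2)) t := by
    intro t
    have h1 := line_hasDerivAt hf a v t
    have h2 : HasDerivAt (fun t : ℝ => t * ⟪gradient f a, v⟫) ⟪gradient f a, v⟫ t := by
      simpa using (hasDerivAt_id t).mul_const ⟪gradient f a, v⟫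
    have h3 : HasDerivAt (fun t : ℝ => t ^ 2 * (L / 2 * ‖v‖ ^ 2))
        (2 * t * (L / 2 * ‖v‖ ^ 2)) t := by
      simpa using (hasDerivAt_pow 2 t).mul_const (L / 2 * ‖v‖ ^ 2)
    exact (h1.sub h2).sub h3
  have hant : AntitoneOn ψ (Set.Icc (0:ℝ) 1) := by
    apply antitoneOn_of_deriv_nonpos (convex_Icc 0 1)
    · exact Continuous.continuousOn (by
        have : ∀ t, DifferentiableAt ℝ ψ t := fun t => (hψd t).differentiableAt
        exact (Differentiable.continuous this))
    · intro t _
      exact (hψd t).differentiableAt.differentiableWithinAt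
    · intro t ht
      rw [interior_Icc] at ht
      rw [(hψd t).deriv]
      have hb : ⟪gradient f (a + t • v) - gradient f a, v⟫ ≤ L * t * ‖v‖ ^ 2 := by
        calc ⟪gradient f (a + t • v) - gradient f a, v⟫
            ≤ ‖gradient f (a + t • v) - gradient f a‖ * ‖v‖ := real_inner_le_norm _ _
          _ ≤ (L * ‖(a + t • v) - a‖) * ‖v‖ := by
              have := hL (a + t • v) a
              have hnn : (0:ℝ) ≤ ‖v‖ := norm_nonneg _
              nlinarith [this]
          _ = L * t * ‖v‖ ^ 2 := by
              rw [add_sub_cancel_left, norm_smul]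
              simp [abs_of_pos ht.1]
              ring
      rw [inner_sub_left] at hb
      nlinarith
  have h01 := hant (Set.mem_Icc.2 ⟨le_refl 0, zero_le_one⟩)
    (Set.mem_Icc.2 ⟨zero_le_one, le_refl 1⟩) zero_le_one
  have hψ1 : ψ 1 = f b - ⟪gradient f a, v⟫ - L / 2 * ‖v‖ ^ 2 := by
    simp [hψ, hv]
  have hψ0 : ψ 0 = f a := by simp [hψ]
  rw [hψ1, hψ0] at h01
  linarith

lemma key_coco {f : E → ℝ} {L : ℝ} (hf : Differentiable ℝ f)
    (hc : ConvexOn ℝ Set.univ f) (hL0 : 0 ≤ L)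
    (hL : ∀ p q, ‖gradient f p - gradient f q‖ ≤ L * ‖p - q‖) (x y : E) :
    ‖gradient f x - gradient f y‖ ^ 2 ≤ 2 * L * (f x - f y - ⟪gradient f y, x - y⟫) := by
  rcases eq_or_lt_of_le hL0 with h0 | hLpos
  · have hn : ‖gradient f x - gradient f y‖ ≤ 0 := by simpa [← h0] using hL x y
    have hn0 : ‖gradient f x - gradient f y‖ = 0 := le_antisymm hn (norm_nonneg _)
    rw [hn0, ← h0]
    norm_num
  · set g := gradient f x - gradient f y with hg
    set b := x - L⁻¹ • g with hb
    have h1 := descent hf hL0 hL x b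
    have h2 := subgrad hf hc b y
    have hbx : b - x = -(L⁻¹ • g) := by rw [hb]; abel
    have e1 : ⟪gradient f x, b - x⟫ = -(L⁻¹ * ⟪gradient f x, g⟫) := by
      rw [hbx, inner_neg_right, real_inner_smul_right]
    have e2 : ‖b - x‖ ^ 2 = L⁻¹ ^ 2 * ‖g‖ ^ 2 := by
      rw [hbx, norm_neg, norm_smul, Real.norm_eq_abs, abs_of_pos (inv_pos.2 hLpos)]
      ring
    have hby : b - y = (x - y) - L⁻¹ • g := by rw [hb]; abel
    have e3 : ⟪gradient f y, b - y⟫ = ⟪gradient f y, x - y⟫ - L⁻¹ * ⟪gradient f y, g⟫ := by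
      rw [hby, inner_sub_right, real_inner_smul_right]
    have e4 : ⟪gradient f x, g⟫ - ⟪gradient f y, g⟫ = ‖g‖ ^ 2 := by
      rw [← inner_sub_left, ← hg, real_inner_self_eq_norm_sq]
    rw [e1, e2] at h1
    rw [e3] at h2
    have hLne : L ≠ 0 := ne_of_gt hLpos
    have e5 : L⁻¹ * (⟪gradient f x, g⟫ - ⟪gradient f y, g⟫) = L⁻¹ * ‖g‖ ^ 2 := by rw [e4]
    have hfin : L⁻¹ * ‖g‖ ^ 2 - L / 2 * (L⁻¹ ^ 2 * ‖g‖ ^ 2) ≤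
        f x - f y - ⟪gradient f y, x - y⟫ := by nlinarith [e5, h1, h2]
    have hsimp : L⁻¹ * ‖g‖ ^ 2 - L / 2 * (L⁻¹ ^ 2 * ‖g‖ ^ 2) = ‖g‖ ^ 2 / (2 * L) := by
      field_simp
      ring
    rw [hsimp] at hfin
    rw [div_le_iff₀ (by positivity)] at hfin
    nlinarith

end aux

/-- Sampling: if `fᵢ = (1/m) Σⱼ f_{i,j}` with each `f_{i,j}` convex and `L`-smooth,
and `g = ∇f_{i,j}(x)` for `j` uniform, then
`E[‖g - ∇fᵢ(x⋆)‖²] ≤ 4 L D_{fᵢ}(x, x⋆) + C` with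
`C = (2/m) Σⱼ ‖∇f_{i,j}(x⋆)‖² - 2 ‖∇fᵢ(x⋆)‖²`. -/
theorem stmt_5 (d m : ℕ) (hm : 0 < m)
    (F : Fin m → EuclideanSpace ℝ (Fin d) → ℝ) (L : ℝ)
    (hdiff : ∀ j, Differentiable ℝ (F j))
    (hconv : ∀ j, ConvexOn ℝ Set.univ (F j))
    (hL : ∀ j x y, ‖gradient (F j) x - gradient (F j) y‖ ≤ L * ‖x - y‖)
    (fi : EuclideanSpace ℝ (Fin d) → ℝ)
    (hfi : fi = fun x => (1 / (m : ℝ)) * ∑ j, F j x)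
    (x xstar : EuclideanSpace ℝ (Fin d)) :
    (1 / (m : ℝ)) * ∑ j, ‖gradient (F j) x - gradient fi xstar‖ ^ 2 ≤
      4 * L * (fi x - fi xstar - ⟪gradient fi xstar, x - xstar⟫) +
        ((2 / (m : ℝ)) * ∑ j, ‖gradient (F j) xstar‖ ^ 2
          - 2 * ‖gradient fi xstar‖ ^ 2) := by
  have hmR : (0:ℝ) < (m:ℝ) := by exact_mod_cast hm
  -- gradient of fi
  have hgrad : ∀ z : EuclideanSpace ℝ (Fin d), gradient fi z = (m:ℝ)⁻¹ • ∑ j, gradient (F j) z := by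
    intro z
    have hs : HasFDerivAt (fun w => ∑ j, F j w) (∑ j, fderiv ℝ (F j) z) z :=
      HasFDerivAt.fun_sum fun j _ => (hdiff j z).hasFDerivAt
    have h2 : HasFDerivAt fi ((m:ℝ)⁻¹ • ∑ j, fderiv ℝ (F j) z) z := by
      rw [hfi]
      have := hs.const_smul ((m:ℝ)⁻¹)
      simpa [one_div, smul_eq_mul, Pi.smul_def] using this
    rw [h2.hasGradientAt.gradient]
    simp only [map_smul, map_sum]
    rfl
  rcases subsingleton_or_nontrivial (EuclideanSpace ℝ (Fin d)) with hsub | hnt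
  · have hz : ∀ z : EuclideanSpace ℝ (Fin d), ‖z‖ = 0 := fun z => by
      rw [Subsingleton.elim z 0]; simp
    have hxx : x = xstar := Subsingleton.elim _ _
    have hsub0 : x - xstar = (0 : EuclideanSpace ℝ (Fin d)) := Subsingleton.elim _ _
    rw [hxx]
    simp [hz]
  · -- L ≥ 0
    obtain ⟨v, hv⟩ := exists_ne (0 : EuclideanSpace ℝ (Fin d))
    have hvpos : 0 < ‖v‖ := norm_pos_iff.2 hv
    have hL0 : 0 ≤ L := by
      have := hL ⟨0, hm⟩ v 0
      have hnn := norm_nonneg (gradient (F ⟨0, hm⟩) v - gradient (F ⟨0, hm⟩) 0)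
      simp only [sub_zero] at this
      nlinarith
    set c := gradient fi xstar with hc
    have hS : ∑ j, gradient (F j) xstar = (m:ℝ) • c := by
      rw [hc, hgrad xstar, smul_smul, mul_inv_cancel₀ (ne_of_gt hmR), one_smul]
    -- sum of squared distances to mean
    have hD : ∑ j, ‖gradient (F j) xstar - c‖ ^ 2
        = (∑ j, ‖gradient (F j) xstar‖ ^ 2) - (m:ℝ) * ‖c‖ ^ 2 := by
      have he : ∀ j : Fin m, ‖gradient (F j) xstar - c‖ ^ 2
          = ‖gradient (F j) xstar‖ ^ 2 - 2 * ⟪gradient (F j) xstar, c⟫ + ‖c‖ ^ 2 := by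
        intro j
        rw [norm_sub_sq_real]
      rw [Finset.sum_congr rfl fun j _ => he j]
      rw [Finset.sum_add_distrib, Finset.sum_sub_distrib]
      rw [← Finset.mul_sum, ← sum_inner, hS, real_inner_smul_left,
        real_inner_self_eq_norm_sq]
      simp [Finset.card_univ]
      ring
    -- Bregman sum identity
    have hE : fi x - fi xstar - ⟪c, x - xstar⟫
        = (m:ℝ)⁻¹ * ∑ j, (F j x - F j xstar - ⟪gradient (F j) xstar, x - xstar⟫) := by
      have hinner : ⟪c, x - xstar⟫
          = (m:ℝ)⁻¹ * ∑ j, ⟪gradient (F j) xstar, x - xstar⟫ := by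
        rw [hc, hgrad xstar, real_inner_smul_left, ← sum_inner]
      rw [hfi, hinner]
      simp only [Finset.sum_sub_distrib]
      field_simp
    -- pointwise bounds
    have step : ∀ j : Fin m, ‖gradient (F j) x - c‖ ^ 2
        ≤ 2 * (2 * L * (F j x - F j xstar - ⟪gradient (F j) xstar, x - xstar⟫))
          + 2 * ‖gradient (F j) xstar - c‖ ^ 2 := by
      intro j
      have hsplit : gradient (F j) x - c
          = (gradient (F j) x - gradient (F j) xstar) + (gradient (F j) xstar - c) := by abel
      have htri : ‖gradient (F j) x - c‖
          ≤ ‖gradient (F j) x - gradient (F j) xstar‖ + ‖gradient (F j) xstar - c‖ := by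
        rw [hsplit]; exact norm_add_le _ _
      have hkey := key_coco (hdiff j) (hconv j) hL0 (hL j) x xstar
      have hsq : ‖gradient (F j) x - c‖ ^ 2
          ≤ (‖gradient (F j) x - gradient (F j) xstar‖ + ‖gradient (F j) xstar - c‖) ^ 2 :=
        pow_le_pow_left₀ (norm_nonneg _) htri 2
      nlinarith [hsq, hkey,
        sq_nonneg (‖gradient (F j) x - gradient (F j) xstar‖ - ‖gradient (F j) xstar - c‖)]
    have hsum : ∑ j, ‖gradient (F j) x - c‖ ^ 2
        ≤ 4 * L * (∑ j, (F j x - F j xstar - ⟪gradient (F j) xstar, x - xstar⟫))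
          + 2 * ((∑ j, ‖gradient (F j) xstar‖ ^ 2) - (m:ℝ) * ‖c‖ ^ 2) := by
      calc ∑ j, ‖gradient (F j) x - c‖ ^ 2
          ≤ ∑ j, (2 * (2 * L * (F j x - F j xstar - ⟪gradient (F j) xstar, x - xstar⟫))
            + 2 * ‖gradient (F j) xstar - c‖ ^ 2) := Finset.sum_le_sum fun j _ => step j
        _ = 4 * L * (∑ j, (F j x - F j xstar - ⟪gradient (F j) xstar, x - xstar⟫))
            + 2 * (∑ j, ‖gradient (F j) xstar - c‖ ^ 2) := by
            rw [Finset.sum_add_distrib, ← Finset.mul_sum, ← Finset.mul_sum, ← Finset.mul_sum]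
            ring
        _ = _ := by rw [hD]
    rw [hE]
    have hfinal := mul_le_mul_of_nonneg_left hsum (le_of_lt (one_div_pos.2 hmR))
    calc (1 / (m:ℝ)) * ∑ j, ‖gradient (F j) x - c‖ ^ 2
        ≤ (1 / (m:ℝ)) * (4 * L * (∑ j, (F j x - F j xstar - ⟪gradient (F j) xstar, x - xstar⟫))
          + 2 * ((∑ j, ‖gradient (F j) xstar‖ ^ 2) - (m:ℝ) * ‖c‖ ^ 2)) := hfinal
      _ = 4 * L * ((m:ℝ)⁻¹ * ∑ j, (F j x - F j xstar - ⟪gradient (F j) xstar, x - xstar⟫))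
          + ((2 / (m:ℝ)) * ∑ j, ‖gradient (F j) xstar‖ ^ 2 - 2 * ‖c‖ ^ 2) := by
        field_simp
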